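/- Let G be a totally ordered abelian group, u > 0, 0 ≤ x ≤ n • u, and a_k = ((x - k • u) ⊓ u) ⊔ 0 for 0 ≤ k ≤ n-1. Then for each k < n-1, (a_k + a_{k+1}) ⊓ u = a_k (equivalently, the truncated sum a_k ⊕ a_{k+1} in the MV-algebra [0,u] equals a_k), i.e., the sequence (a_k) is a good sequence. -/

import Mathlib

theorem truncations_good_sequence {G : Type*} [AddCommGroup G] [LinearOrder G] [IsOrderedAddMonoid G]
    (u : G) (hu : 0 < u) (n : ℕ) (hn : 1 ≤ n) (x : G)
    (hx0 : 0 ≤ x) (hxn : x ≤ n • u)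
    (a : ℕ → G) (ha : ∀ k, a k = ((x - k • u) ⊓ u) ⊔ 0) :
    ∀ k, k + 1 < n → (a k + a (k + 1)) ⊓ u = a k := by
  intro k _
  rcases le_total x ((k + 1) • u) with h | h
  · have hk1 : a (k + 1) = 0 := by
      rw [ha]
      have : x - (k + 1 : ℕ) • u ≤ 0 := by
        rw [sub_nonpos]
        simpa using h
      exact sup_eq_right.mpr (inf_le_left.trans this)
    have hle : a k ≤ u := by
      rw [ha]
      exact sup_le inf_le_right hu.le
    rw [hk1, add_zero, inf_eq_left.mpr hle]
  · have hk : a k = u := by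
      rw [ha]
      have : u ≤ x - (k : ℕ) • u := by
        rw [le_sub_iff_add_le]
        calc u + (k : ℕ) • u = (k + 1) • u := by
              rw [add_comm, succ_nsmul]
          _ ≤ x := h
      rw [inf_eq_right.mpr this, sup_eq_left.mpr hu.le]
    have h0 : 0 ≤ a (k + 1) := by rw [ha]; exact le_sup_right
    rw [hk, inf_eq_right.mpr (le_add_of_nonneg_right h0)]
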